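/- Let r and r̃ ≤ r be positive integers, σ² > 0, and λ₁, …, λ_r̃ > 0. Consider maximizing f(S̃) = log₂ det(I_r + (1/σ²) Λ S̃) − tr(S̃) over r×r Hermitian positive semidefinite matrices S̃, where Λ = diag(λ₁², …, λ_r̃², 0, …, 0). Then the diagonal matrix S̃* = diag(p̃₁, …, p̃_r̃, 0, …, 0) with p̃_k = max(1/ln 2 − σ²/λ_k², 0) for k = 1, …, r̃ is a global maximizer: f(S̃) ≤ f(S̃*) for every Hermitian PSD S̃. -/

import Mathlib

open Matrix ComplexOrder
/-- Scalar water-filling inequality. -/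
lemma scalar_wf {c s : ℝ} (hc : 0 < c) (hs : 0 ≤ s) :
    Real.logb 2 (1 + c * s) - s ≤
      Real.logb 2 (1 + c * max (1 / Real.log 2 - 1 / c) 0)
        - max (1 / Real.log 2 - 1 / c) 0 := by
  set p := max (1 / Real.log 2 - 1 / c) 0 with hp
  have hlog2 : 0 < Real.log 2 := Real.log_pos one_lt_two
  have hp0 : 0 ≤ p := le_max_right _ _
  have h1s : 0 < 1 + c * s := by positivity
  have h1p : 0 < 1 + c * p := by positivity
  have key : Real.log (1 + c * s) - Real.log (1 + c * p) ≤ c * (s - p) / (1 + c * p) := by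
    have h2 := Real.log_le_sub_one_of_pos (show 0 < (1 + c*s)/(1+c*p) by positivity)
    rw [Real.log_div h1s.ne' h1p.ne'] at h2
    calc Real.log (1+c*s) - Real.log (1+c*p) ≤ (1 + c*s)/(1+c*p) - 1 := h2
      _ = c * (s - p) / (1 + c*p) := by field_simp; ring
  have main : (Real.log (1 + c * s) - Real.log (1 + c * p)) / Real.log 2 ≤ s - p := by
    rcases le_or_gt (1/c) (1/Real.log 2) with h | h
    · have hpe : p = 1 / Real.log 2 - 1/c := max_eq_left (by linarith)
      have h1pe : 1 + c * p = c / Real.log 2 := by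
        rw [hpe]; field_simp; ring
      calc (Real.log (1 + c * s) - Real.log (1 + c * p)) / Real.log 2
          ≤ (c * (s - p) / (1 + c * p)) / Real.log 2 :=
            div_le_div_of_nonneg_right key hlog2.le
        _ = s - p := by rw [h1pe]; field_simp
    · have hcl : c < Real.log 2 := by
        by_contra hcon
        push_neg at hcon
        have h2 : 1/c ≤ 1/Real.log 2 := one_div_le_one_div_of_le hlog2 hcon
        linarith
      have hpe : p = 0 := max_eq_right (by
        have : 1 / Real.log 2 < 1 / c := h
        linarith)
      calc (Real.log (1 + c * s) - Real.log (1 + c * p)) / Real.log 2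
          ≤ (c * (s - p) / (1 + c * p)) / Real.log 2 :=
            div_le_div_of_nonneg_right key hlog2.le
        _ = c * s / Real.log 2 := by rw [hpe]; simp
        _ ≤ s - p := by
            rw [hpe, sub_zero, div_le_iff₀ hlog2]
            nlinarith
  have hlogb : ∀ x : ℝ, Real.logb 2 x = Real.log x / Real.log 2 := fun x => rfl
  rw [hlogb, hlogb]
  have := sub_div (Real.log (1 + c * s)) (Real.log (1 + c * p)) (Real.log 2)
  linarith [main, this.symm.le]

lemma psd_det_le_prod_diag {n : Type*} [Fintype n] [DecidableEq n]
    {A : Matrix n n ℂ} (hA : A.PosSemidef) (ha : ∀ i, 0 < (A i i).re) :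
    A.det.re ≤ ∏ i, (A i i).re := by
  set a : n → ℝ := fun i => (A i i).re with ha_def
  have hAdiag : ∀ i, A i i = (a i : ℂ) := by
    intro i
    have h1 : star (A i i) = A i i := by
      conv_rhs => rw [← hA.1]
      simp [conjTranspose_apply]
    have h2 : (A i i).im = 0 := by
      have := congrArg Complex.im h1
      simp [Complex.conj_im] at this
      linarith
    exact (Complex.ext (by simp [ha_def]) (by simp [h2])).symm
  set d : n → ℝ := fun i => (Real.sqrt (a i))⁻¹ with hd_def
  have hdpos : ∀ i, 0 < d i := fun i => by
    have := ha i; positivity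
  set D : Matrix n n ℂ := diagonal (fun i => (d i : ℂ)) with hD_def
  have hDH : Dᴴ = D := by
    have hst : (star fun i => ((d i : ℝ) : ℂ)) = fun i => ((d i : ℝ) : ℂ) :=
      funext fun i => Complex.conj_ofReal _
    rw [hD_def, diagonal_conjTranspose, hst]
  set B : Matrix n n ℂ := D * A * D with hB_def
  have hB : B.PosSemidef := by
    have := hA.mul_mul_conjTranspose_same D
    rwa [hDH] at this
  have hBapp : ∀ i j, B i j = (d i : ℂ) * A i j * (d j : ℂ) := by
    intro i j
    rw [hB_def, hD_def, mul_diagonal, diagonal_mul]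
  have hBdiag : ∀ i, B i i = 1 := by
    intro i
    have h3 : Real.sqrt (a i) ≠ 0 := ne_of_gt (Real.sqrt_pos.mpr (ha i))
    have h2 : Real.sqrt (a i) * Real.sqrt (a i) = a i := Real.mul_self_sqrt (ha i).le
    have hthis : d i * a i * d i = 1 := by
      rw [hd_def]
      simp only
      rw [← h2]
      field_simp
      rw [Real.sqrt_sq (Real.sqrt_nonneg _)]
    have hc : ((d i : ℂ)) * (a i : ℂ) * (d i : ℂ) = ((d i * a i * d i : ℝ) : ℂ) := by
      push_cast; ring
    rw [hBapp, hAdiag, hc, hthis, Complex.ofReal_one]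
  set μ : n → ℝ := hB.1.eigenvalues with hμ_def
  have hμ0 : ∀ i, 0 ≤ μ i := hB.eigenvalues_nonneg
  have htrace : ∑ i, μ i = Fintype.card n := by
    have hU := hB.1.spectral_theorem
    have h1 : B.trace = (diagonal (RCLike.ofReal ∘ μ) : Matrix n n ℂ).trace := by
      conv_lhs => rw [hU]
      rw [Unitary.conjStarAlgAut_apply, trace_mul_cycle, Unitary.coe_star_mul_self, one_mul]
    have h2 : B.trace = (Fintype.card n : ℂ) := by
      rw [trace]
      simp [diag, hBdiag]
    rw [h2, trace_diagonal] at h1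
    have h3 : (Fintype.card n : ℂ) = ((∑ i, μ i : ℝ) : ℂ) := by
      rw [h1]
      push_cast
      rfl
    have := congrArg Complex.re h3
    simpa using this.symm
  have hprodμ : ∏ i, μ i ≤ 1 := by
    by_cases hz : ∀ i, 0 < μ i
    · have h1 : ∏ i, μ i = Real.exp (∑ i, Real.log (μ i)) := by
        rw [Real.exp_sum]
        exact (Finset.prod_congr rfl fun i _ => (Real.exp_log (hz i)).symm)
      rw [h1]
      have h2 : ∑ i, Real.log (μ i) ≤ ∑ i, (μ i - 1) :=
        Finset.sum_le_sum fun i _ => Real.log_le_sub_one_of_pos (hz i)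
      have h3 : ∑ i, (μ i - 1) = 0 := by
        rw [Finset.sum_sub_distrib, htrace]
        simp
      calc Real.exp (∑ i, Real.log (μ i)) ≤ Real.exp 0 := by
            apply Real.exp_le_exp.mpr; rw [← h3]; exact h2
        _ = 1 := Real.exp_zero
    · push_neg at hz
      obtain ⟨i, hi⟩ := hz
      have : μ i = 0 := le_antisymm hi (hμ0 i)
      calc ∏ j, μ j = 0 := Finset.prod_eq_zero (Finset.mem_univ i) this
        _ ≤ 1 := zero_le_one
  have hdetB : B.det = ((∏ i, μ i : ℝ) : ℂ) := by
    rw [hB.1.det_eq_prod_eigenvalues]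
    push_cast
    rfl
  have hdetD : D.det = ((∏ i, d i : ℝ) : ℂ) := by
    rw [hD_def, det_diagonal]
    push_cast
    rfl
  have hdetBmul : B.det = ((∏ i, d i : ℝ) : ℂ) * A.det * ((∏ i, d i : ℝ) : ℂ) := by
    rw [hB_def, det_mul, det_mul, hdetD]
  have hTpos : 0 < ∏ i, d i := Finset.prod_pos fun i _ => hdpos i
  have hTne : ((∏ i, d i : ℝ) : ℂ) ≠ 0 := Complex.ofReal_ne_zero.mpr hTpos.ne'
  have hinv : (∏ i, d i)⁻¹ * (∏ i, d i)⁻¹ = ∏ i, a i := by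
    rw [← Finset.prod_inv_distrib, ← Finset.prod_mul_distrib]
    apply Finset.prod_congr rfl
    intro i _
    rw [hd_def]
    simp [Real.mul_self_sqrt (ha i).le]
    exact Real.mul_self_sqrt (ha i).le
  have hgoal : ((∏ i, d i : ℝ) : ℂ) * A.det * ((∏ i, d i : ℝ) : ℂ) = ((∏ i, μ i : ℝ) : ℂ) := by
    rw [← hdetBmul, hdetB]
  have hTT : (((∏ i, d i : ℝ) : ℂ))⁻¹ * (((∏ i, d i : ℝ) : ℂ))⁻¹ = ((∏ i, a i : ℝ) : ℂ) := by
    rw [← Complex.ofReal_inv, ← Complex.ofReal_mul, hinv]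
  have hself : ((∏ i, d i : ℝ) : ℂ) * A.det * ((∏ i, d i : ℝ) : ℂ)
      * ((((∏ i, d i : ℝ) : ℂ))⁻¹ * (((∏ i, d i : ℝ) : ℂ))⁻¹) = A.det := by
    have hr : ((∏ i, d i : ℝ) : ℂ) * A.det * ((∏ i, d i : ℝ) : ℂ)
        * ((((∏ i, d i : ℝ) : ℂ))⁻¹ * (((∏ i, d i : ℝ) : ℂ))⁻¹)
        = A.det * (((∏ i, d i : ℝ) : ℂ) * (((∏ i, d i : ℝ) : ℂ))⁻¹)
          * (((∏ i, d i : ℝ) : ℂ) * (((∏ i, d i : ℝ) : ℂ))⁻¹) := by ring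
    rw [hr, mul_inv_cancel₀ hTne, mul_one, mul_one]
  have hAdet : A.det = (((∏ i, μ i) * ∏ i, a i : ℝ) : ℂ) := by
    rw [← hself, hgoal, hTT, ← Complex.ofReal_mul]
  rw [hAdet]
  simp only [Complex.ofReal_re]
  have hprodA : 0 ≤ ∏ i, a i := Finset.prod_nonneg fun i _ => (ha i).le
  nlinarith

/-- solution of the inner Lagrangian maximization (19): with
`Λ = diag(λ₁², …, λ_r̃², 0, …, 0)`, the diagonal matrix
`S̃* = diag(p̃₁, …, p̃_r̃, 0, …, 0)` with `p̃_k = max(1/ln 2 − σ²/λ_k², 0)` globally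
maximizes `f(S̃) = log₂ det(I_r + (1/σ²) Λ S̃) − tr(S̃)` over Hermitian PSD `S̃`. -/
theorem stmt_9 (r rt : ℕ) (hr : 0 < r) (hrt : 0 < rt) (hle : rt ≤ r)
    (σ2 : ℝ) (hσ2 : 0 < σ2) (lam : Fin rt → ℝ) (hlam : ∀ k, 0 < lam k) :
    ∀ St : Matrix (Fin r) (Fin r) ℂ, St.PosSemidef →
      Real.logb 2 ((1 + σ2⁻¹ •
          ((Matrix.diagonal fun i : Fin r =>
            if h : (i : ℕ) < rt then ((lam ⟨i, h⟩ ^ 2 : ℝ) : ℂ) else 0) * St)).det.re)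
        - (St.trace).re ≤
      Real.logb 2 ((1 + σ2⁻¹ •
          ((Matrix.diagonal fun i : Fin r =>
            if h : (i : ℕ) < rt then ((lam ⟨i, h⟩ ^ 2 : ℝ) : ℂ) else 0) *
           (Matrix.diagonal fun i : Fin r =>
            if h : (i : ℕ) < rt then
              ((max (1 / Real.log 2 - σ2 / lam ⟨i, h⟩ ^ 2) 0 : ℝ) : ℂ)
            else 0))).det.re)
        - ((Matrix.diagonal fun i : Fin r =>
            if h : (i : ℕ) < rt then
              ((max (1 / Real.log 2 - σ2 / lam ⟨i, h⟩ ^ 2) 0 : ℝ) : ℂ)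
            else 0 : Matrix (Fin r) (Fin r) ℂ).trace).re := by
  intro St hSt
  set d : Fin r → ℝ := fun i => if h : (i : ℕ) < rt then lam ⟨i, h⟩ ^ 2 else 0 with hd_def
  set p : Fin r → ℝ := fun i => if h : (i : ℕ) < rt then
      max (1 / Real.log 2 - σ2 / lam ⟨i, h⟩ ^ 2) 0 else 0 with hp_def
  have hfunΛ : (fun i : Fin r => if h : (i : ℕ) < rt then ((lam ⟨i, h⟩ ^ 2 : ℝ) : ℂ) else 0)
      = fun i => ((d i : ℝ) : ℂ) := by
    funext i; rw [hd_def]; split_ifs with h <;> simp [h]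
  have hfunP : (fun i : Fin r => if h : (i : ℕ) < rt then
        ((max (1 / Real.log 2 - σ2 / lam ⟨i, h⟩ ^ 2) 0 : ℝ) : ℂ) else 0)
      = fun i => ((p i : ℝ) : ℂ) := by
    funext i; rw [hp_def]; split_ifs with h <;> simp [h]
  rw [hfunΛ, hfunP]
  have hd0 : ∀ i, 0 ≤ d i := by
    intro i; rw [hd_def]; dsimp only; split_ifs with h
    · positivity
    · exact le_refl 0
  have hp0 : ∀ i, 0 ≤ p i := by
    intro i; rw [hp_def]; dsimp only; split_ifs with h
    · exact le_max_right _ _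
    · exact le_refl 0
  -- the RHS matrix is diagonal
  have hRHSmat : (1 + σ2⁻¹ • ((diagonal fun i : Fin r => ((d i : ℝ) : ℂ)) *
        diagonal fun i : Fin r => ((p i : ℝ) : ℂ)))
      = diagonal (fun i : Fin r => ((1 + σ2⁻¹ * (d i * p i) : ℝ) : ℂ)) := by
    rw [diagonal_mul_diagonal]
    ext i j
    rcases eq_or_ne i j with rfl | hij
    · simp only [Matrix.add_apply, Matrix.smul_apply, one_apply_eq, diagonal_apply_eq,
        Complex.real_smul]
      push_cast
      ring
    · simp [Matrix.add_apply, Matrix.smul_apply, one_apply_ne hij, diagonal_apply_ne _ hij]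
  have hfacRHS : ∀ i : Fin r, 0 < 1 + σ2⁻¹ * (d i * p i) := by
    intro i
    have := mul_nonneg (mul_nonneg (inv_nonneg.mpr hσ2.le) (hd0 i)) (hp0 i)
    nlinarith [mul_nonneg (hd0 i) (hp0 i), inv_nonneg.mpr hσ2.le]
  have hRHSdet : ((1 + σ2⁻¹ • ((diagonal fun i : Fin r => ((d i : ℝ) : ℂ)) *
        diagonal fun i : Fin r => ((p i : ℝ) : ℂ))).det).re
      = ∏ i, (1 + σ2⁻¹ * (d i * p i)) := by
    rw [hRHSmat, det_diagonal, ← Complex.ofReal_prod, Complex.ofReal_re]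
  have hRHStr : ((diagonal fun i : Fin r => ((p i : ℝ) : ℂ)).trace).re = ∑ i, p i := by
    rw [trace_diagonal, ← Complex.ofReal_sum, Complex.ofReal_re]
  -- diagonal entries of St
  set s : Fin r → ℝ := fun i => (St i i).re with hs_def
  have htrSt : St.trace.re = ∑ i, s i := by
    rw [trace]
    exact Complex.re_sum _ _
  have hs_eq : ∀ i, St i i = ((s i : ℝ) : ℂ) := by
    intro i
    have h1 : star (St i i) = St i i := by
      conv_rhs => rw [← hSt.1]
      simp [conjTranspose_apply]
    have h2 : (St i i).im = 0 := by
      have := congrArg Complex.im h1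
      simp [Complex.conj_im] at this
      linarith
    exact (Complex.ext (by simp [hs_def]) (by simp [hs_def, h2])).symm
  have hs0 : ∀ i, 0 ≤ s i := by
    intro i
    have h := hSt.re_dotProduct_nonneg (Pi.single i 1)
    have heq : (star (Pi.single i 1) : Fin r → ℂ) ⬝ᵥ St *ᵥ Pi.single i 1 = St i i := by
      simp [dotProduct, mulVec, Pi.single_apply, Pi.star_apply, apply_ite,
        Finset.sum_ite_eq', mul_comm]
    rw [heq] at h
    simpa [hs_def] using h
  -- change of variables via the square root of the diagonal matrix
  set e : Fin r → ℝ := fun i => σ2⁻¹ * d i with he_def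
  have he0 : ∀ i, 0 ≤ e i := fun i => mul_nonneg (inv_nonneg.mpr hσ2.le) (hd0 i)
  set q : Fin r → ℝ := fun i => Real.sqrt (e i) with hq_def
  set Q : Matrix (Fin r) (Fin r) ℂ := diagonal (fun i => ((q i : ℝ) : ℂ)) with hQ_def
  have hQH : Qᴴ = Q := by
    have hst : (star fun i : Fin r => ((q i : ℝ) : ℂ)) = fun i => ((q i : ℝ) : ℂ) :=
      funext fun i => Complex.conj_ofReal _
    rw [hQ_def, diagonal_conjTranspose, hst]
  have hQQ : Q * Q = σ2⁻¹ • (diagonal fun i : Fin r => ((d i : ℝ) : ℂ)) := by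
    rw [hQ_def, diagonal_mul_diagonal]
    ext i j
    rcases eq_or_ne i j with rfl | hij
    · simp only [Matrix.smul_apply, diagonal_apply_eq, Complex.real_smul]
      rw [← Complex.ofReal_mul, Real.mul_self_sqrt (he0 i), he_def]
      push_cast
      ring
    · simp [Matrix.smul_apply, diagonal_apply_ne _ hij]
  set M : Matrix (Fin r) (Fin r) ℂ := Q * St * Q with hM_def
  have hLdet : (1 + σ2⁻¹ • ((diagonal fun i : Fin r => ((d i : ℝ) : ℂ)) * St)).det
      = (1 + M).det := by
    have h1 : σ2⁻¹ • ((diagonal fun i : Fin r => ((d i : ℝ) : ℂ)) * St) = Q * (Q * St) := by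
      rw [← Matrix.mul_assoc, hQQ, Matrix.smul_mul]
    rw [h1, det_one_add_mul_comm Q (Q * St), hM_def, Matrix.mul_assoc]
  have hM : M.PosSemidef := by
    have := hSt.mul_mul_conjTranspose_same Q
    rwa [hQH] at this
  have hPD : (1 + M).PosDef := Matrix.PosDef.add_posSemidef Matrix.PosDef.one hM
  have hMii : ∀ i, M i i = ((e i * s i : ℝ) : ℂ) := by
    intro i
    rw [hM_def, hQ_def, mul_diagonal, diagonal_mul, hs_eq i]
    rw [show ((q i : ℝ) : ℂ) * ((s i : ℝ) : ℂ) * ((q i : ℝ) : ℂ)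
        = ((q i * s i * q i : ℝ) : ℂ) by push_cast; ring]
    congr 1
    rw [hq_def]
    dsimp only
    linear_combination s i * Real.mul_self_sqrt (he0 i)
  have hdiag : ∀ i, ((1 + M) i i).re = 1 + e i * s i := by
    intro i
    simp [Matrix.add_apply, one_apply_eq, hMii i]
  have hdiagpos : ∀ i, 0 < ((1 + M) i i).re := by
    intro i
    rw [hdiag]
    nlinarith [mul_nonneg (he0 i) (hs0 i)]
  have hHad : (1 + M).det.re ≤ ∏ i, (1 + e i * s i) := by
    have h := psd_det_le_prod_diag hPD.posSemidef hdiagpos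
    calc (1 + M).det.re ≤ ∏ i, ((1 + M) i i).re := h
      _ = ∏ i, (1 + e i * s i) := Finset.prod_congr rfl fun i _ => hdiag i
  have hdetpos : 0 < (1 + M).det.re := by
    have h := hPD.det_pos
    rw [Complex.lt_def] at h
    simpa using h.1
  have hfacL : ∀ i : Fin r, 0 < 1 + e i * s i := by
    intro i
    nlinarith [mul_nonneg (he0 i) (hs0 i)]
  -- main chain
  have hLlog : Real.logb 2 ((1 + σ2⁻¹ • ((diagonal fun i : Fin r =>
        ((d i : ℝ) : ℂ)) * St)).det.re) ≤ ∑ i, Real.logb 2 (1 + e i * s i) := by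
    rw [hLdet]
    calc Real.logb 2 ((1 + M).det.re) ≤ Real.logb 2 (∏ i, (1 + e i * s i)) :=
          Real.logb_le_logb_of_le one_lt_two hdetpos hHad
      _ = ∑ i, Real.logb 2 (1 + e i * s i) :=
          Real.logb_prod _ _ fun i _ => (hfacL i).ne'
  have hRlog : Real.logb 2 ((1 + σ2⁻¹ • ((diagonal fun i : Fin r => ((d i : ℝ) : ℂ)) *
        diagonal fun i : Fin r => ((p i : ℝ) : ℂ))).det.re)
      = ∑ i, Real.logb 2 (1 + σ2⁻¹ * (d i * p i)) := by
    rw [hRHSdet]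
    exact Real.logb_prod _ _ fun i _ => (hfacRHS i).ne'
  have hterm : ∀ i : Fin r, Real.logb 2 (1 + e i * s i) - s i
      ≤ Real.logb 2 (1 + σ2⁻¹ * (d i * p i)) - p i := by
    intro i
    by_cases h : (i : ℕ) < rt
    · have hdi : d i = lam ⟨i, h⟩ ^ 2 := by rw [hd_def]; exact dif_pos h
      set c : ℝ := σ2⁻¹ * lam ⟨i, h⟩ ^ 2 with hc_def
      have hc : 0 < c := by
        have := hlam ⟨i, h⟩
        positivity
      have hinvc : 1 / c = σ2 / lam ⟨i, h⟩ ^ 2 := by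
        rw [hc_def]
        field_simp
      have hpi : p i = max (1 / Real.log 2 - 1 / c) 0 := by
        rw [hp_def]
        dsimp only
        rw [dif_pos h, hinvc]
      have hei : e i = c := by rw [he_def]; dsimp only; rw [hdi]
      have h1 : σ2⁻¹ * (d i * p i) = c * p i := by rw [hdi, hc_def]; ring
      rw [hei, h1, hpi]
      exact scalar_wf hc (hs0 i)
    · have hdi : d i = 0 := by rw [hd_def]; exact dif_neg h
      have hpi : p i = 0 := by rw [hp_def]; exact dif_neg h
      have hei : e i = 0 := by rw [he_def]; dsimp only; rw [hdi]; ring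
      rw [hdi, hpi, hei]
      simp [Real.logb]
      exact hs0 i
  have hsum : ∑ i, (Real.logb 2 (1 + e i * s i) - s i)
      ≤ ∑ i, (Real.logb 2 (1 + σ2⁻¹ * (d i * p i)) - p i) :=
    Finset.sum_le_sum fun i _ => hterm i
  rw [Finset.sum_sub_distrib, Finset.sum_sub_distrib] at hsum
  rw [htrSt, hRHStr, hRlog]
  linarith
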